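/- Let 0 < α₀ < π/2 and let θ: [−α₀, α₀] × [0, 2π] → ℝ be a C¹ function with θ(−α₀, β) = 0 and θ(α₀, β) = π for all β. Writing θ₂ = ∂θ/∂α, one has ∫₀^{2π} ∫_{−α₀}^{α₀} √(1 + cos²(α)·θ₂(α,β)²) dα dβ ≥ K_{α₀} + 2π²·cos(α₀), where K_{α₀} = ∫₀^{2π} ∫_{−α₀}^{α₀} √(1 − cos²(α₀)/cos²(α)) dα dβ. -/

import Mathlib

open Real


private lemma aux_cont_param (F : ℝ × ℝ → ℝ) (hF : Continuous F) (a b : ℝ) :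
    Continuous fun β => ∫ α in a..b, F (α, β) :=
  intervalIntegral.continuous_parametric_intervalIntegral_of_continuous'
    (f := fun β α => F (α, β)) (hF.comp continuous_swap) a b

theorem stmt5 (α₀ : ℝ) (h0 : 0 < α₀) (h1 : α₀ < π / 2)
    (θ : ℝ × ℝ → ℝ) (hC1 : ContDiff ℝ 1 θ)
    (hbd1 : ∀ β ∈ Set.Icc (0 : ℝ) (2 * π), θ (-α₀, β) = 0)
    (hbd2 : ∀ β ∈ Set.Icc (0 : ℝ) (2 * π), θ (α₀, β) = π) :
    (∫ β in (0 : ℝ)..(2 * π), ∫ α in (-α₀)..α₀,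
        Real.sqrt (1 + Real.cos α ^ 2 * (deriv (fun a => θ (a, β)) α) ^ 2)) ≥
      (∫ β in (0 : ℝ)..(2 * π), ∫ α in (-α₀)..α₀,
        Real.sqrt (1 - Real.cos α₀ ^ 2 / Real.cos α ^ 2)) +
      2 * π ^ 2 * Real.cos α₀ := by
  have hle : -α₀ ≤ α₀ := by linarith
  set g : ℝ × ℝ → ℝ := fun p => fderiv ℝ θ p (1, 0) with hg
  have hgcont : Continuous g :=
    (hC1.continuous_fderiv one_ne_zero).clm_apply continuous_const
  have hderivAt : ∀ β α, HasDerivAt (fun a => θ (a, β)) (g (α, β)) α := by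
    intro β α
    have h1 : HasDerivAt (fun a : ℝ => (a, β)) ((1 : ℝ), (0 : ℝ)) α :=
      (hasDerivAt_id α).prodMk (hasDerivAt_const α β)
    exact ((hC1.differentiable one_ne_zero (α, β)).hasFDerivAt.comp_hasDerivAt α h1)
  have hderiv : ∀ β α, deriv (fun a => θ (a, β)) α = g (α, β) := fun β α =>
    (hderivAt β α).deriv
  -- facts about cosines
  have hcos : ∀ α ∈ Set.Icc (-α₀) α₀, Real.cos α₀ ≤ Real.cos α ∧ 0 < Real.cos α := by
    intro α hα
    have h2 : Real.cos α = Real.cos |α| := by rw [Real.cos_abs]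
    have habs : |α| ≤ α₀ := abs_le.2 ⟨hα.1, hα.2⟩
    constructor
    · rw [h2]
      apply Real.cos_le_cos_of_nonneg_of_le_pi (abs_nonneg α) (by linarith [Real.pi_pos]) habs
    · rw [h2]
      apply Real.cos_pos_of_mem_Ioo
      constructor
      · linarith [abs_nonneg α, Real.pi_pos]
      · linarith [abs_nonneg α]
  have hcosα₀ : 0 < Real.cos α₀ := Real.cos_pos_of_mem_Ioo ⟨by linarith, h1⟩
  -- pointwise inequality
  have key : ∀ α ∈ Set.Icc (-α₀) α₀, ∀ t : ℝ,
      Real.sqrt (1 - Real.cos α₀ ^ 2 / Real.cos α ^ 2) + Real.cos α₀ * t ≤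
        Real.sqrt (1 + Real.cos α ^ 2 * t ^ 2) := by
    intro α hα t
    obtain ⟨hc1, hc2⟩ := hcos α hα
    set v : ℝ := Real.cos α₀ / Real.cos α with hv
    have hv1 : v ≤ 1 := (div_le_one hc2).2 hc1
    have hv0 : 0 < v := div_pos hcosα₀ hc2
    set s : ℝ := Real.cos α * t with hs
    have hvs : v * s = Real.cos α₀ * t := by
      rw [hv, hs, div_mul_eq_mul_div, div_eq_iff hc2.ne']
      ring
    have harg : 1 - Real.cos α₀ ^ 2 / Real.cos α ^ 2 = 1 - v ^ 2 := by
      rw [hv, div_pow]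
    rw [harg]
    have hvsq : v ^ 2 ≤ 1 := by nlinarith
    set u : ℝ := Real.sqrt (1 - v ^ 2) with hu
    have hu0 : 0 ≤ u := Real.sqrt_nonneg _
    have hu2 : u ^ 2 = 1 - v ^ 2 := Real.sq_sqrt (by linarith)
    have hsq : (u + v * s) ^ 2 ≤ 1 + s ^ 2 := by nlinarith [sq_nonneg (s * u - v)]
    have : u + v * s ≤ Real.sqrt (1 + s ^ 2) := by
      calc u + v * s ≤ |u + v * s| := le_abs_self _
        _ = Real.sqrt ((u + v * s) ^ 2) := (Real.sqrt_sq_eq_abs _).symm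
        _ ≤ Real.sqrt (1 + s ^ 2) := Real.sqrt_le_sqrt hsq
    calc u + Real.cos α₀ * t = u + v * s := by rw [hvs]
      _ ≤ Real.sqrt (1 + s ^ 2) := this
      _ = Real.sqrt (1 + Real.cos α ^ 2 * t ^ 2) := by rw [hs]; ring_nf
  -- rewrite deriv as g in the LHS
  have hrw : (∫ β in (0 : ℝ)..(2 * π), ∫ α in (-α₀)..α₀,
        Real.sqrt (1 + Real.cos α ^ 2 * (deriv (fun a => θ (a, β)) α) ^ 2)) =
      ∫ β in (0 : ℝ)..(2 * π), ∫ α in (-α₀)..α₀,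
        Real.sqrt (1 + Real.cos α ^ 2 * (g (α, β)) ^ 2) := by
    simp only [hderiv]
  rw [hrw]
  -- the RHS inner integrand constant in β
  set C : ℝ := ∫ α in (-α₀)..α₀, Real.sqrt (1 - Real.cos α₀ ^ 2 / Real.cos α ^ 2) with hC
  have hRHS : (∫ β in (0 : ℝ)..(2 * π), ∫ α in (-α₀)..α₀,
      Real.sqrt (1 - Real.cos α₀ ^ 2 / Real.cos α ^ 2)) = 2 * π * C := by
    rw [intervalIntegral.integral_const, sub_zero, smul_eq_mul]
  rw [hRHS]
  -- integrability of continuous pieces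
  have hf1cont : Continuous (fun p : ℝ × ℝ =>
      Real.sqrt (1 + Real.cos p.1 ^ 2 * (g (p.1, p.2)) ^ 2)) := by
    exact Real.continuous_sqrt.comp (continuous_const.add
      (((Real.continuous_cos.comp continuous_fst).pow 2).mul (hgcont.pow 2)))
  -- inner bound for each β
  have hinner : ∀ β ∈ Set.Icc (0 : ℝ) (2 * π),
      C + π * Real.cos α₀ ≤ ∫ α in (-α₀)..α₀,
        Real.sqrt (1 + Real.cos α ^ 2 * (g (α, β)) ^ 2) := by
    intro β hβ
    have hint1 : IntervalIntegrable (fun α =>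
        Real.sqrt (1 + Real.cos α ^ 2 * (g (α, β)) ^ 2)) MeasureTheory.volume (-α₀) α₀ :=
      (hf1cont.comp (continuous_id.prodMk continuous_const)).intervalIntegrable _ _
    have hint3 : IntervalIntegrable (fun α => Real.cos α₀ * g (α, β))
        MeasureTheory.volume (-α₀) α₀ :=
      (continuous_const.mul (hgcont.comp (continuous_id.prodMk continuous_const))).intervalIntegrable _ _
    have hint2 : IntervalIntegrable (fun α =>
        Real.sqrt (1 - Real.cos α₀ ^ 2 / Real.cos α ^ 2)) MeasureTheory.volume (-α₀) α₀ := by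
      apply ContinuousOn.intervalIntegrable
      apply ContinuousOn.sqrt
      apply ContinuousOn.sub continuousOn_const
      apply ContinuousOn.div continuousOn_const (Continuous.continuousOn (Real.continuous_cos.pow 2))
      intro x hx
      rw [Set.uIcc_of_le hle] at hx
      exact pow_ne_zero 2 (ne_of_gt (hcos x hx).2)
    have hmono : (∫ α in (-α₀)..α₀,
          (Real.sqrt (1 - Real.cos α₀ ^ 2 / Real.cos α ^ 2) + Real.cos α₀ * g (α, β))) ≤
        ∫ α in (-α₀)..α₀, Real.sqrt (1 + Real.cos α ^ 2 * (g (α, β)) ^ 2) := by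
      apply intervalIntegral.integral_mono_on hle (hint2.add hint3) hint1
      intro α hα
      exact key α hα (g (α, β))
    have hftc : (∫ α in (-α₀)..α₀, g (α, β)) = π := by
      rw [intervalIntegral.integral_eq_sub_of_hasDerivAt
        (f := fun a => θ (a, β)) (fun x _ => hderivAt β x)
        ((hgcont.comp (continuous_id.prodMk continuous_const)).intervalIntegrable _ _)]
      rw [hbd1 β hβ, hbd2 β hβ]
      ring
    rw [intervalIntegral.integral_add hint2 hint3,
      intervalIntegral.integral_const_mul, hftc] at hmono
    calc C + π * Real.cos α₀ = C + Real.cos α₀ * π := by ring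
      _ ≤ _ := hmono
  -- outer integral
  have houter : (∫ β in (0 : ℝ)..(2 * π), (C + π * Real.cos α₀)) ≤
      ∫ β in (0 : ℝ)..(2 * π), ∫ α in (-α₀)..α₀,
        Real.sqrt (1 + Real.cos α ^ 2 * (g (α, β)) ^ 2) := by
    apply intervalIntegral.integral_mono_on (by positivity)
    · exact intervalIntegrable_const
    · exact (aux_cont_param _ hf1cont (-α₀) α₀).intervalIntegrable _ _
    · exact hinner
  rw [intervalIntegral.integral_const] at houter
  have hπ : 0 < π := Real.pi_pos
  calc 2 * π * C + 2 * π ^ 2 * Real.cos α₀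
      = (2 * π - 0) • (C + π * Real.cos α₀) := by rw [smul_eq_mul]; ring
    _ ≤ _ := houter
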